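/- For all real β > 0, γ > 0 and b ∈ ℝ, the absolutely convergent integral ∫₀^∞ x·exp(-β·√(γ² + x²))·sin(b·x) dx equals β·b·γ²·K₂(γ·√(β² + b²)) / (β² + b²). -/

import Mathlib

open MeasureTheory Real Set Filter Complex

/-- The modified Bessel function of the second kind (MacDonald function),
`K_ν(z) = ∫₀^∞ exp(-z cosh t) cosh(ν t) dt`. -/
noncomputable def besselK (ν z : ℝ) : ℝ :=
  ∫ t in Set.Ioi (0 : ℝ), Real.exp (-z * Real.cosh t) * Real.cosh (ν * t)


-- atBot limit
lemma GR_tendsto_atBot (a δ : ℝ) (hδ : 0 < δ) :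
    Tendsto (fun t : ℝ => a * t - δ * Real.cosh t) atTop atBot := by
  have h1 : Tendsto (fun t : ℝ => Real.exp t * (a * (t * Real.exp (-t)) - δ / 2)) atTop atBot := by
    have h2 : Tendsto (fun t : ℝ => a * (t * Real.exp (-t)) - δ / 2) atTop (nhds (-(δ/2))) := by
      have := (Real.tendsto_pow_mul_exp_neg_atTop_nhds_zero 1).const_mul a
      simpa using this.sub_const (δ/2)
    exact Tendsto.atTop_mul_neg (by linarith) Real.tendsto_exp_atTop h2
  refine tendsto_atBot_mono (fun t => ?_) h1
  have hc : Real.exp t / 2 ≤ Real.cosh t := by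
    rw [Real.cosh_eq]
    have := (Real.exp_pos (-t)).le
    linarith
  have he : Real.exp t * (t * Real.exp (-t)) = t := by
    rw [show Real.exp t * (t * Real.exp (-t)) = t * (Real.exp t * Real.exp (-t)) by ring,
      ← Real.exp_add]
    simp
  have : Real.exp t * (a * (t * Real.exp (-t)) - δ / 2)
      = a * t - δ/2 * Real.exp t := by
    rw [mul_sub, show Real.exp t * (a * (t * Real.exp (-t))) = a * (Real.exp t * (t * Real.exp (-t))) by ring, he]
    ring
  rw [this]
  nlinarith [Real.exp_pos t]

-- integrability of exp(a t) exp(-δ cosh t) on Ioi 0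
lemma GR_integrable_exp_cosh (a δ : ℝ) (hδ : 0 < δ) :
    IntegrableOn (fun t : ℝ => Real.exp (a * t) * Real.exp (-δ * Real.cosh t)) (Ioi 0) := by
  apply integrable_of_isBigO_exp_neg (one_pos) (Continuous.continuousOn (by continuity))
  rw [Asymptotics.isBigO_iff]
  refine ⟨1, ?_⟩
  have h := GR_tendsto_atBot (a + 1) δ hδ
  filter_upwards [h.eventually (eventually_le_atBot 0)] with t ht
  rw [← Real.exp_add, Real.norm_eq_abs, Real.norm_eq_abs, Real.abs_exp, Real.abs_exp, one_mul,
    Real.exp_le_exp]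
  nlinarith

lemma GR_tendsto_zero (a δ : ℝ) (hδ : 0 < δ) :
    Tendsto (fun t : ℝ => Real.exp (a * t) * Real.exp (-δ * Real.cosh t)) atTop (nhds 0) := by
  have h2 : Tendsto (fun t : ℝ => Real.exp (a * t - δ * Real.cosh t)) atTop (nhds 0) :=
    Real.tendsto_exp_atBot.comp (GR_tendsto_atBot a δ hδ)
  refine h2.congr (fun t => ?_)
  rw [← Real.exp_add]; ring_nf

lemma GR_norm_sinh_le (w : ℂ) : ‖Complex.sinh w‖ ≤ Real.cosh w.re := by
  rw [show Complex.sinh w = (Complex.exp w - Complex.exp (-w)) / 2 from rfl, Real.cosh_eq]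
  calc ‖(Complex.exp w - Complex.exp (-w)) / 2‖
      ≤ (‖Complex.exp w‖ + ‖Complex.exp (-w)‖) / 2 := by
        rw [norm_div]
        gcongr
        · exact norm_sub_le _ _
        · norm_num
    _ = (Real.exp w.re + Real.exp (-w.re)) / 2 := by
        rw [Complex.norm_exp, Complex.norm_exp,
          Complex.neg_re]

lemma GR_norm_cosh_le (w : ℂ) : ‖Complex.cosh w‖ ≤ Real.cosh w.re := by
  rw [show Complex.cosh w = (Complex.exp w + Complex.exp (-w)) / 2 from rfl, Real.cosh_eq]
  calc ‖(Complex.exp w + Complex.exp (-w)) / 2‖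
      ≤ (‖Complex.exp w‖ + ‖Complex.exp (-w)‖) / 2 := by
        rw [norm_div]
        gcongr
        · exact norm_add_le _ _
        · norm_num
    _ = (Real.exp w.re + Real.exp (-w.re)) / 2 := by
        rw [Complex.norm_exp, Complex.norm_exp,
          Complex.neg_re]

lemma GR_sinh_add_mul_I (x y : ℝ) :
    Complex.sinh (x + y * Complex.I)
      = (Real.sinh x * Real.cos y : ℝ) + (Real.cosh x * Real.sin y : ℝ) * Complex.I := by
  rw [Complex.sinh_add, Complex.sinh_mul_I, Complex.cosh_mul_I]
  push_cast
  ring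

lemma GR_cosh_add_mul_I (x y : ℝ) :
    Complex.cosh (x + y * Complex.I)
      = (Real.cosh x * Real.cos y : ℝ) + (Real.sinh x * Real.sin y : ℝ) * Complex.I := by
  rw [Complex.cosh_add, Complex.sinh_mul_I, Complex.cosh_mul_I]
  push_cast
  ring
noncomputable def GRg (c θ : ℝ) (w : ℂ) : ℂ :=
  (1/2 : ℂ) * Complex.sinh (2*w + 2*(θ:ℂ)*Complex.I) * Complex.exp (-(c:ℂ) * Complex.cosh w)

noncomputable def GRg' (c θ : ℝ) (w : ℂ) : ℂ :=
  Complex.cosh (2*w + 2*(θ:ℂ)*Complex.I) * Complex.exp (-(c:ℂ) * Complex.cosh w)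
    - (c/2 : ℂ) * Complex.sinh (2*w + 2*(θ:ℂ)*Complex.I) * Complex.sinh w
        * Complex.exp (-(c:ℂ) * Complex.cosh w)

lemma GRg_hasDerivAt (c θ : ℝ) (w : ℂ) : HasDerivAt (GRg c θ) (GRg' c θ w) w := by
  have h1 : HasDerivAt (fun w : ℂ => 2*w + 2*(θ:ℂ)*Complex.I) 2 w := by
    simpa using ((hasDerivAt_id w).const_mul (2:ℂ)).add_const (2*(θ:ℂ)*Complex.I)
  have h2 : HasDerivAt (fun w : ℂ => (1/2 : ℂ) * Complex.sinh (2*w + 2*(θ:ℂ)*Complex.I))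
      ((1/2 : ℂ) * (Complex.cosh (2*w + 2*(θ:ℂ)*Complex.I) * 2)) w := h1.csinh.const_mul _
  have h3 : HasDerivAt (fun w : ℂ => -(c:ℂ) * Complex.cosh w) (-(c:ℂ) * Complex.sinh w) w :=
    (Complex.hasDerivAt_cosh w).const_mul _
  have h4 := h3.cexp
  have := h2.mul h4
  refine this.congr_deriv ?_
  unfold GRg'
  ring

lemma GR_cosh_le_exp {x : ℝ} (hx : 0 ≤ x) : Real.cosh x ≤ Real.exp x := by
  rw [Real.cosh_eq]
  have h : Real.exp (-x) ≤ Real.exp x := Real.exp_le_exp.2 (by linarith)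
  linarith

lemma GR_re_exponent (c t φ : ℝ) :
    (-(c:ℂ) * Complex.cosh ((t:ℂ) - (φ:ℝ)*Complex.I)).re
      = -(c * Real.cos φ) * Real.cosh t := by
  have : ((t:ℂ) - (φ:ℝ)*Complex.I) = (t:ℂ) + ((-φ : ℝ):ℂ)*Complex.I := by push_cast; ring
  rw [this, GR_cosh_add_mul_I]
  simp [Complex.mul_re, Complex.cos_ofReal_re]
  ring

lemma GR_norm_exp_exponent (c t φ : ℝ) :
    ‖Complex.exp (-(c:ℂ) * Complex.cosh ((t:ℂ) - (φ:ℝ)*Complex.I))‖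
      = Real.exp (-(c * Real.cos φ) * Real.cosh t) := by
  rw [Complex.norm_exp, GR_re_exponent]

lemma GRg_norm_le (c θ t φ : ℝ) :
    ‖GRg c θ ((t:ℂ) - (φ:ℝ)*Complex.I)‖
      ≤ Real.cosh (2*t) * Real.exp (-(c * Real.cos φ) * Real.cosh t) := by
  unfold GRg
  rw [norm_mul, norm_mul, GR_norm_exp_exponent]
  have h1 : ‖Complex.sinh (2*((t:ℂ) - (φ:ℝ)*Complex.I) + 2*(θ:ℂ)*Complex.I)‖
      ≤ Real.cosh (2*t) := by
    have := GR_norm_sinh_le (2*((t:ℂ) - (φ:ℝ)*Complex.I) + 2*(θ:ℂ)*Complex.I)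
    convert this using 3
    simp
  have h0 : ‖(1/2 : ℂ)‖ ≤ 1 := by norm_num
  have hcs : (0:ℝ) ≤ Real.cosh (2*t) := (Real.cosh_pos (x := 2*t)).le
  calc ‖(1/2 : ℂ)‖ * ‖Complex.sinh (2*((t:ℂ) - (φ:ℝ)*Complex.I) + 2*(θ:ℂ)*Complex.I)‖
        * Real.exp (-(c * Real.cos φ) * Real.cosh t)
      ≤ 1 * Real.cosh (2*t) * Real.exp (-(c * Real.cos φ) * Real.cosh t) := by
        gcongr
    _ = Real.cosh (2*t) * Real.exp (-(c * Real.cos φ) * Real.cosh t) := by ring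

lemma GRg'_norm_le (c θ t φ : ℝ) (hc : 0 ≤ c) :
    ‖GRg' c θ ((t:ℂ) - (φ:ℝ)*Complex.I)‖
      ≤ (1 + c) * (Real.cosh (2*t) * Real.cosh t)
          * Real.exp (-(c * Real.cos φ) * Real.cosh t) := by
  unfold GRg'
  set w := (t:ℂ) - (φ:ℝ)*Complex.I with hw
  have hre : w.re = t := by simp [hw]
  have hre2 : (2*w + 2*(θ:ℂ)*Complex.I).re = 2*t := by simp [hw]
  have hch : ‖Complex.cosh (2*w + 2*(θ:ℂ)*Complex.I)‖ ≤ Real.cosh (2*t) := by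
    simpa [hre2] using GR_norm_cosh_le (2*w + 2*(θ:ℂ)*Complex.I)
  have hsh : ‖Complex.sinh (2*w + 2*(θ:ℂ)*Complex.I)‖ ≤ Real.cosh (2*t) := by
    simpa [hre2] using GR_norm_sinh_le (2*w + 2*(θ:ℂ)*Complex.I)
  have hshw : ‖Complex.sinh w‖ ≤ Real.cosh t := by
    simpa [hre] using GR_norm_sinh_le w
  have hexp : ‖Complex.exp (-(c:ℂ) * Complex.cosh w)‖
      = Real.exp (-(c * Real.cos φ) * Real.cosh t) := GR_norm_exp_exponent c t φ
  have h1t : (1:ℝ) ≤ Real.cosh t := Real.one_le_cosh t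
  have hc2t : (0:ℝ) < Real.cosh (2*t) := Real.cosh_pos (x := 2*t)
  calc ‖Complex.cosh (2*w + 2*(θ:ℂ)*Complex.I) * Complex.exp (-(c:ℂ) * Complex.cosh w)
        - (c/2 : ℂ) * Complex.sinh (2*w + 2*(θ:ℂ)*Complex.I) * Complex.sinh w
            * Complex.exp (-(c:ℂ) * Complex.cosh w)‖
      ≤ ‖Complex.cosh (2*w + 2*(θ:ℂ)*Complex.I) * Complex.exp (-(c:ℂ) * Complex.cosh w)‖
        + ‖(c/2 : ℂ) * Complex.sinh (2*w + 2*(θ:ℂ)*Complex.I) * Complex.sinh w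
            * Complex.exp (-(c:ℂ) * Complex.cosh w)‖ := norm_sub_le _ _
    _ ≤ Real.cosh (2*t) * Real.exp (-(c * Real.cos φ) * Real.cosh t)
        + (c/2) * Real.cosh (2*t) * Real.cosh t * Real.exp (-(c * Real.cos φ) * Real.cosh t) := by
        rw [norm_mul, norm_mul, norm_mul, norm_mul, hexp]
        have hnc : ‖(c/2 : ℂ)‖ = c/2 := by
          rw [show ((c:ℂ)/2) = ((c/2 : ℝ) : ℂ) by push_cast; ring, Complex.norm_real,
            Real.norm_eq_abs, _root_.abs_of_nonneg (by linarith)]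
        rw [hnc]
        have := Real.exp_pos (-(c * Real.cos φ) * Real.cosh t)
        gcongr <;> first | exact norm_nonneg _ | linarith | assumption
    _ ≤ (1 + c) * (Real.cosh (2*t) * Real.cosh t)
          * Real.exp (-(c * Real.cos φ) * Real.cosh t) := by
        set E := Real.exp (-(c * Real.cos φ) * Real.cosh t) with hE
        have hEpos : 0 < E := Real.exp_pos _
        nlinarith [mul_le_mul_of_nonneg_right (mul_le_mul_of_nonneg_left h1t hc2t.le) hEpos.le,
          mul_nonneg (mul_nonneg hc2t.le (by linarith : (0:ℝ) ≤ Real.cosh t)) hEpos.le]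

lemma GR_im_helper (A B E : ℝ) :
    ((1/2:ℂ) * ((A:ℂ) + (B:ℂ) * Complex.I) * (E:ℂ)).im = 1/2 * B * E := by
  simp [Complex.mul_im, Complex.mul_re]

lemma GR_im_helper2 (r x y : ℝ) :
    (((r:ℝ):ℂ) * Complex.exp ((x:ℂ) + (y:ℂ)*Complex.I)).im
      = r * (Real.exp x * Real.sin y) := by
  rw [Complex.mul_im]
  simp [Complex.exp_im, Complex.exp_re]

lemma GR_integrableOn (β γ b : ℝ) (hβ : 0 < β) :
    IntegrableOn (fun x : ℝ => x * Real.exp (-β * Real.sqrt (γ ^ 2 + x ^ 2)) * Real.sin (b * x))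
      (Ioi 0) volume := by
  have hg : IntegrableOn (fun x : ℝ => x * Real.exp (-β * x)) (Ioi 0) volume := by
    apply integrable_of_isBigO_exp_neg (half_pos hβ) (Continuous.continuousOn (by continuity))
    rw [Asymptotics.isBigO_iff]
    refine ⟨1, ?_⟩
    have key : Tendsto (fun x : ℝ => x * Real.exp (-(β/2) * x)) atTop (nhds 0) := by
      have h1 : Tendsto (fun x : ℝ => (β/2) * x) atTop atTop :=
        Tendsto.const_mul_atTop (half_pos hβ) tendsto_id
      have h2 := (Real.tendsto_pow_mul_exp_neg_atTop_nhds_zero 1).comp h1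
      have h3 := h2.const_mul (2/β)
      simp only [mul_zero] at h3
      refine h3.congr (fun x => ?_)
      have : β ≠ 0 := hβ.ne'
      simp only [Function.comp, pow_one]
      rw [show -(β/2)*x = -(β/2*x) by ring]
      field_simp
    filter_upwards [eventually_ge_atTop (0:ℝ),
      key.eventually (eventually_le_nhds (by norm_num : (0:ℝ) < 1))] with x hx hkey
    rw [Real.norm_eq_abs, Real.norm_eq_abs, _root_.abs_of_nonneg
      (by positivity : (0:ℝ) ≤ x * Real.exp (-β*x)), Real.abs_exp, one_mul]
    have : x * Real.exp (-β*x) = (x * Real.exp (-(β/2)*x)) * Real.exp (-(β/2)*x) := by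
      rw [mul_assoc, ← Real.exp_add]; ring_nf
    rw [this]
    have := Real.exp_pos (-(β/2)*x)
    nlinarith
  apply hg.mono' (Continuous.aestronglyMeasurable (by continuity))
  filter_upwards [ae_restrict_mem measurableSet_Ioi] with x hx
  have hx0 : (0:ℝ) < x := hx
  have hs : x ≤ Real.sqrt (γ^2 + x^2) := by
    have h := Real.sqrt_le_sqrt (show x^2 ≤ γ^2+x^2 by nlinarith)
    rwa [Real.sqrt_sq hx0.le] at h
  have h1 : Real.exp (-β * Real.sqrt (γ^2+x^2)) ≤ Real.exp (-β * x) := by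
    apply Real.exp_le_exp.2; nlinarith
  have h2 : |Real.sin (b*x)| ≤ 1 := Real.abs_sin_le_one _
  rw [norm_mul, norm_mul, Real.norm_eq_abs, Real.norm_eq_abs, Real.norm_eq_abs,
    abs_of_pos hx0, Real.abs_exp]
  calc x * Real.exp (-β * Real.sqrt (γ^2+x^2)) * |Real.sin (b*x)|
      ≤ x * Real.exp (-β * x) * 1 := by
        gcongr
    _ = x * Real.exp (-β*x) := by ring
set_option maxHeartbeats 2000000 in
lemma GR_main (β γ b : ℝ) (hβ : 0 < β) (hγ : 0 < γ) (hb : 0 ≤ b) :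
    ∫ x in Set.Ioi (0:ℝ), x * Real.exp (-β * Real.sqrt (γ^2 + x^2)) * Real.sin (b*x)
      = β * b * γ^2 * besselK 2 (γ * Real.sqrt (β^2 + b^2)) / (β^2 + b^2) := by
  set z := Real.sqrt (β^2+b^2) with hzdef
  have hz0 : 0 < z := Real.sqrt_pos.2 (by positivity)
  have hz2 : z^2 = β^2+b^2 := Real.sq_sqrt (by positivity)
  have hbz : b < z := by
    rw [hzdef]; exact (Real.lt_sqrt hb).2 (by nlinarith)
  set θ := Real.arcsin (b/z) with hθdef
  have hb1 : b / z < 1 := (div_lt_one hz0).2 hbz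
  have hθ0 : 0 ≤ θ := Real.arcsin_nonneg.2 (by positivity)
  have hθlt : θ < π/2 := Real.arcsin_lt_pi_div_two.2 hb1
  have hbz0 : (0:ℝ) ≤ b/z := div_nonneg hb hz0.le
  have hsinθ : Real.sin θ = b/z := Real.sin_arcsin (by linarith) hb1.le
  have hcosθ : Real.cos θ = β/z := by
    rw [hθdef, Real.cos_arcsin,
      show 1 - (b/z)^2 = (β/z)^2 by field_simp; nlinarith]
    exact Real.sqrt_sq (by positivity)
  set c := γ * z with hcdef
  have hc0 : 0 < c := by positivity
  set θ' := (θ + π/2)/2 with hθ'def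
  have hθθ' : θ < θ' := by rw [hθ'def]; linarith
  have hθ'lt : θ' < π/2 := by rw [hθ'def]; linarith
  have hθ'0 : 0 < θ' := by rw [hθ'def]; linarith [Real.pi_pos]
  have hκ : 0 < Real.cos θ' := Real.cos_pos_of_mem_Ioo ⟨by linarith, hθ'lt⟩
  set δ := c * Real.cos θ' with hδdef
  have hδ0 : 0 < δ := by positivity
  have hmono : ∀ φ : ℝ, |φ| ≤ θ' → Real.cos θ' ≤ Real.cos φ := by
    intro φ hφ
    rw [← Real.cos_abs φ]
    exact Real.cos_le_cos_of_nonneg_of_le_pi (abs_nonneg φ) (by linarith [Real.pi_pos]) hφ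
  have hDint : IntegrableOn
      (fun t : ℝ => (1+c) * (Real.exp (3*t) * Real.exp (-δ * Real.cosh t))) (Ioi 0) volume :=
    (GR_integrable_exp_cosh 3 δ hδ0).const_mul _
  -- pointwise bounds along horizontal rays
  have hray : ∀ t φ : ℝ, 0 ≤ t → |φ| ≤ θ' →
      ‖GRg' c θ ((t:ℂ) - (φ:ℂ)*Complex.I)‖
        ≤ (1+c) * (Real.exp (3*t) * Real.exp (-δ * Real.cosh t)) := by
    intro t φ ht hφ
    refine (GRg'_norm_le c θ t φ hc0.le).trans ?_
    have e1 : Real.cosh (2*t) ≤ Real.exp (2*t) := GR_cosh_le_exp (by linarith)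
    have e2 : Real.cosh t ≤ Real.exp t := GR_cosh_le_exp ht
    have hcosh1 : (0:ℝ) < Real.cosh (2*t) := Real.cosh_pos (x := 2*t)
    have hcosh2 : (0:ℝ) < Real.cosh t := Real.cosh_pos (x := t)
    have e3 : Real.exp (-(c * Real.cos φ) * Real.cosh t) ≤ Real.exp (-δ * Real.cosh t) := by
      apply Real.exp_le_exp.2
      have h5 := hmono φ hφ
      rw [hδdef]
      nlinarith [mul_le_mul_of_nonneg_right (mul_le_mul_of_nonneg_left h5 hc0.le) hcosh2.le]
    calc (1+c) * (Real.cosh (2*t) * Real.cosh t) * Real.exp (-(c * Real.cos φ) * Real.cosh t)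
        ≤ (1+c) * (Real.exp (2*t) * Real.exp t) * Real.exp (-δ * Real.cosh t) := by
          gcongr <;> linarith
      _ = (1+c) * (Real.exp (3*t) * Real.exp (-δ * Real.cosh t)) := by
          rw [← Real.exp_add, show 2*t + t = 3*t by ring]; ring
  have hrayg : ∀ t φ : ℝ, 0 ≤ t → |φ| ≤ θ' →
      ‖GRg c θ ((t:ℂ) - (φ:ℂ)*Complex.I)‖
        ≤ Real.exp (2*t) * Real.exp (-δ * Real.cosh t) := by
    intro t φ ht hφ
    refine (GRg_norm_le c θ t φ).trans ?_
    have e1 : Real.cosh (2*t) ≤ Real.exp (2*t) := GR_cosh_le_exp (by linarith)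
    have hcosh2 : (0:ℝ) < Real.cosh t := Real.cosh_pos (x := t)
    have e3 : Real.exp (-(c * Real.cos φ) * Real.cosh t) ≤ Real.exp (-δ * Real.cosh t) := by
      apply Real.exp_le_exp.2
      have h5 := hmono φ hφ
      rw [hδdef]
      nlinarith [mul_le_mul_of_nonneg_right (mul_le_mul_of_nonneg_left h5 hc0.le) hcosh2.le]
    exact mul_le_mul e1 e3 (Real.exp_pos _).le (Real.exp_pos _).le
  -- continuity facts
  have hc1 : Continuous (fun w : ℂ => 2*w + 2*(θ:ℂ)*Complex.I) :=
    (continuous_const.mul continuous_id).add continuous_const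
  have hc2 : Continuous (fun w : ℂ => -(c:ℂ) * Complex.cosh w) :=
    continuous_const.mul Complex.continuous_cosh
  have hcontg : Continuous (GRg c θ) := by
    unfold GRg
    exact (continuous_const.mul (Complex.continuous_sinh.comp hc1)).mul
      (Complex.continuous_exp.comp hc2)
  have hcontg' : Continuous (GRg' c θ) := by
    unfold GRg'
    exact ((Complex.continuous_cosh.comp hc1).mul (Complex.continuous_exp.comp hc2)).sub
      (((continuous_const.mul (Complex.continuous_sinh.comp hc1)).mul
        Complex.continuous_sinh).mul (Complex.continuous_exp.comp hc2))
  have hline : ∀ φ : ℝ, Continuous (fun t : ℝ => (t:ℂ) - (φ:ℂ)*Complex.I) := fun φ =>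
    Complex.continuous_ofReal.sub continuous_const
  -- integrability along rays
  have hgint : ∀ φ : ℝ, |φ| ≤ θ' →
      IntegrableOn (fun t : ℝ => GRg c θ ((t:ℂ) - (φ:ℂ)*Complex.I)) (Ioi 0) volume := by
    intro φ hφ
    apply ((GR_integrable_exp_cosh 2 δ hδ0).mono'
      ((hcontg.comp (hline φ)).aestronglyMeasurable))
    filter_upwards [ae_restrict_mem measurableSet_Ioi] with t ht
    exact hrayg t φ (le_of_lt ht) hφ
  have hg'int : ∀ φ : ℝ, |φ| ≤ θ' →
      IntegrableOn (fun t : ℝ => GRg' c θ ((t:ℂ) - (φ:ℂ)*Complex.I)) (Ioi 0) volume := by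
    intro φ hφ
    apply (hDint.mono' ((hcontg'.comp (hline φ)).aestronglyMeasurable))
    filter_upwards [ae_restrict_mem measurableSet_Ioi] with t ht
    exact hray t φ (le_of_lt ht) hφ
  set h : ℝ → ℂ := fun φ => ∫ t in Ioi (0:ℝ), GRg c θ ((t:ℂ) - (φ:ℂ)*Complex.I) with hhdef
  -- FTC along each horizontal ray
  have hft : ∀ φ₀ : ℝ, |φ₀| ≤ θ' →
      ∫ t in Ioi (0:ℝ), GRg' c θ ((t:ℂ) - (φ₀:ℂ)*Complex.I)
        = - GRg c θ (-(φ₀:ℂ)*Complex.I) := by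
    intro φ₀ hφ'
    have hfderiv : ∀ t : ℝ, HasDerivAt (fun t : ℝ => GRg c θ ((t:ℂ) - (φ₀:ℂ)*Complex.I))
        (GRg' c θ ((t:ℂ) - (φ₀:ℂ)*Complex.I)) t := by
      intro t
      have h1 : HasDerivAt (fun w : ℂ => GRg c θ (w - (φ₀:ℂ)*Complex.I))
          (GRg' c θ ((t:ℂ) - (φ₀:ℂ)*Complex.I)) (t:ℂ) := by
        exact ((GRg_hasDerivAt c θ ((t:ℂ) - (φ₀:ℂ)*Complex.I)).comp ((t:ℂ))
          ((hasDerivAt_id ((t:ℂ))).sub_const ((φ₀:ℂ)*Complex.I))).congr_deriv (mul_one _)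
      exact h1.comp_ofReal
    have htend : Tendsto (fun t : ℝ => GRg c θ ((t:ℂ) - (φ₀:ℂ)*Complex.I)) atTop (nhds 0) := by
      apply squeeze_zero_norm' ?_ (GR_tendsto_zero 2 δ hδ0)
      filter_upwards [eventually_ge_atTop (0:ℝ)] with t ht
      exact hrayg t φ₀ ht hφ'
    have := integral_Ioi_of_hasDerivAt_of_tendsto
      ((hfderiv 0).continuousAt.continuousWithinAt)
      (fun x _ => hfderiv x) (hg'int φ₀ hφ') htend
    rw [this]
    norm_num
  have hder : ∀ φ₀ : ℝ, φ₀ ∈ Icc 0 θ →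
      HasDerivAt h (Complex.I * GRg c θ (-(φ₀:ℂ)*Complex.I)) φ₀ := by
    intro φ₀ hφ₀
    have hφ' : |φ₀| ≤ θ' := by rw [_root_.abs_of_nonneg hφ₀.1]; linarith [hφ₀.2]
    have hε0 : (0:ℝ) < θ' - θ := by linarith
    have hball : ∀ φ : ℝ, φ ∈ Metric.ball φ₀ (θ' - θ) → |φ| ≤ θ' := by
      intro φ hmem
      rw [Metric.mem_ball, Real.dist_eq] at hmem
      have h1 : |φ| - |φ₀| ≤ |φ - φ₀| := abs_sub_abs_le_abs_sub φ φ₀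
      have h2 : |φ₀| ≤ θ := by rw [_root_.abs_of_nonneg hφ₀.1]; exact hφ₀.2
      linarith
    have hderφ : ∀ (t : ℝ) (φ : ℝ),
        HasDerivAt (fun φ : ℝ => GRg c θ ((t:ℂ) - (φ:ℂ)*Complex.I))
          (-Complex.I * GRg' c θ ((t:ℂ) - (φ:ℂ)*Complex.I)) φ := by
      intro t φ
      have hw : HasDerivAt (fun φ : ℝ => (t:ℂ) - (φ:ℂ)*Complex.I) (-Complex.I) φ := by
        have h0 : (fun φ : ℝ => (t:ℂ) - (φ:ℂ)*Complex.I)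
            = (fun φ : ℝ => (t:ℂ) - φ • Complex.I) := by
          funext ψ; rw [Complex.real_smul]
        rw [h0]
        simpa using ((hasDerivAt_id φ).smul_const Complex.I).const_sub ((t:ℂ))
      have hF := ((GRg_hasDerivAt c θ ((t:ℂ) - (φ:ℂ)*Complex.I)).hasFDerivAt).restrictScalars ℝ
      have := hF.comp_hasDerivAt φ hw
      simp [smul_eq_mul, neg_mul, mul_comm] at this ⊢; exact this
    have hbnd : ∀ᵐ (t : ℝ) ∂(volume.restrict (Ioi (0:ℝ))), ∀ φ ∈ Metric.ball φ₀ (θ' - θ),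
        ‖-Complex.I * GRg' c θ ((t:ℂ) - (φ:ℂ)*Complex.I)‖
          ≤ (1+c) * (Real.exp (3*t) * Real.exp (-δ * Real.cosh t)) := by
      filter_upwards [ae_restrict_mem measurableSet_Ioi] with t ht
      intro φ hmem
      rw [norm_mul, norm_neg, Complex.norm_I, one_mul]
      exact hray t φ (le_of_lt ht) (hball φ hmem)
    have hdiff : ∀ᵐ (t : ℝ) ∂(volume.restrict (Ioi (0:ℝ))), ∀ φ ∈ Metric.ball φ₀ (θ' - θ),
        HasDerivAt (fun φ : ℝ => GRg c θ ((t:ℂ) - (φ:ℂ)*Complex.I))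
          (-Complex.I * GRg' c θ ((t:ℂ) - (φ:ℂ)*Complex.I)) φ :=
      Eventually.of_forall fun t => fun φ _ => hderφ t φ
    have key := hasDerivAt_integral_of_dominated_loc_of_deriv_le (μ := volume.restrict (Ioi 0))
      (F := fun (φ : ℝ) (t : ℝ) => GRg c θ ((t:ℂ) - (φ:ℂ)*Complex.I))
      (F' := fun (φ : ℝ) (t : ℝ) => -Complex.I * GRg' c θ ((t:ℂ) - (φ:ℂ)*Complex.I))
      (x₀ := φ₀) (bound := fun t => (1+c) * (Real.exp (3*t) * Real.exp (-δ * Real.cosh t)))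
      (Metric.ball_mem_nhds φ₀ hε0)
      (Eventually.of_forall fun φ => (hcontg.comp (hline φ)).aestronglyMeasurable)
      (hgint φ₀ hφ')
      ((continuous_const.mul (hcontg'.comp (hline φ₀))).aestronglyMeasurable)
      hbnd hDint hdiff
    have hkey := key.2
    have heq : (∫ t in Ioi (0:ℝ), -Complex.I * GRg' c θ ((t:ℂ) - (φ₀:ℂ)*Complex.I))
        = Complex.I * GRg c θ (-(φ₀:ℂ)*Complex.I) := by
      rw [MeasureTheory.integral_const_mul, hft φ₀ hφ']
      ring
    rw [heq] at hkey
    exact hkey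
    -- imaginary part is conserved along the contour deformation
  have hreal : ∀ φ : ℝ, Complex.I * GRg c θ (-(φ:ℂ)*Complex.I)
      = ((-(1/2) * Real.sin (2*(θ-φ)) * Real.exp (-(c * Real.cos φ)) : ℝ) : ℂ) := by
    intro φ
    unfold GRg
    rw [show 2*(-(φ:ℂ)*Complex.I) + 2*(θ:ℂ)*Complex.I = ((2*(θ-φ) : ℝ):ℂ) * Complex.I by
      push_cast; ring]
    rw [show -(φ:ℂ)*Complex.I = ((-φ : ℝ):ℂ)*Complex.I by push_cast; ring]
    rw [Complex.cosh_mul_I, Complex.sinh_mul_I]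
    rw [show Complex.cos ((-φ:ℝ):ℂ) = ((Real.cos (-φ) : ℝ):ℂ) from (Complex.ofReal_cos _).symm]
    rw [show Complex.sin ((2*(θ-φ):ℝ):ℂ) = ((Real.sin (2*(θ-φ)) : ℝ):ℂ) from
      (Complex.ofReal_sin _).symm]
    rw [show -(c:ℂ) * ((Real.cos (-φ) : ℝ):ℂ) = ((-(c * Real.cos φ) : ℝ):ℂ) by
      rw [Real.cos_neg]; push_cast; ring]
    rw [← Complex.ofReal_exp]
    rw [show ((-(1/2) * Real.sin (2*(θ-φ)) * Real.exp (-(c * Real.cos φ)) : ℝ) : ℂ)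
      = (((-(1/2) : ℝ):ℂ)) * ((Real.sin (2*(θ-φ)) : ℝ):ℂ) * ((Real.exp (-(c * Real.cos φ)) : ℝ):ℂ)
        by push_cast; ring]
    have hI : Complex.I * Complex.I = -1 := Complex.I_mul_I
    push_cast
    ring_nf
    rw [Complex.I_sq]
    ring
  have him : (h θ).im = (h 0).im := by
    have hFTC2 := intervalIntegral.integral_eq_sub_of_hasDerivAt
      (f := h) (f' := fun φ => Complex.I * GRg c θ (-(φ:ℂ)*Complex.I)) (a := 0) (b := θ)
      (fun φ hφ => hder φ (by rwa [Set.uIcc_of_le hθ0] at hφ))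
      (Continuous.intervalIntegrable (continuous_const.mul (hcontg.comp
        (by continuity))) _ _)
    have : h θ - h 0 = ((∫ φ in (0:ℝ)..θ,
        -(1/2) * Real.sin (2*(θ-φ)) * Real.exp (-(c * Real.cos φ)) : ℝ) : ℂ) := by
      rw [← hFTC2, ← intervalIntegral.integral_ofReal]
      exact intervalIntegral.integral_congr (fun φ _ => hreal φ)
    have h2 : (h θ - h 0).im = 0 := by rw [this, Complex.ofReal_im]
    rw [Complex.sub_im] at h2
    linarith
  -- value at φ = 0
  have h0im : (h 0).im = ((1/2) * Real.sin (2*θ)) * besselK 2 c := by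
    have him0 : ∀ t : ℝ, (GRg c θ ((t:ℂ) - ((0:ℝ):ℂ)*Complex.I)).im
        = ((1/2) * Real.sin (2*θ)) * (Real.exp (-c * Real.cosh t) * Real.cosh (2*t)) := by
      intro t
      rw [show (t:ℂ) - ((0:ℝ):ℂ)*Complex.I = (t:ℂ) by push_cast; ring]
      unfold GRg
      rw [show 2*(t:ℂ) + 2*(θ:ℂ)*Complex.I = ((2*t : ℝ):ℂ) + ((2*θ:ℝ):ℂ)*Complex.I by
        push_cast; ring]
      rw [GR_sinh_add_mul_I]
      rw [show Complex.cosh (t:ℂ) = ((Real.cosh t : ℝ):ℂ) from (Complex.ofReal_cosh t).symm]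
      rw [show -(c:ℂ) * ((Real.cosh t : ℝ):ℂ) = ((-(c * Real.cosh t) : ℝ):ℂ) by
        push_cast; ring]
      rw [← Complex.ofReal_exp]
      rw [GR_im_helper]
      rw [show -(c * Real.cosh t) = -c * Real.cosh t by ring]
      ring
    calc (h 0).im = ∫ t in Ioi (0:ℝ), (GRg c θ ((t:ℂ) - ((0:ℝ):ℂ)*Complex.I)).im := by
          rw [hhdef]
          exact (integral_im (hgint 0 (by rw [abs_zero]; linarith))).symm
      _ = ∫ t in Ioi (0:ℝ), ((1/2) * Real.sin (2*θ))
            * (Real.exp (-c * Real.cosh t) * Real.cosh (2*t)) := by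
          exact MeasureTheory.setIntegral_congr_fun measurableSet_Ioi (fun t _ => him0 t)
      _ = ((1/2) * Real.sin (2*θ)) * besselK 2 c := by
          rw [MeasureTheory.integral_const_mul]
          rfl
  -- value at φ = θ
  have hθim : (h θ).im = ∫ t in Ioi (0:ℝ),
      (1/2) * Real.sinh (2*t) * Real.exp (-(γ*β) * Real.cosh t) * Real.sin (γ*b*Real.sinh t) := by
    have hccos : c * Real.cos θ = γ * β := by rw [hcosθ, hcdef]; field_simp
    have hcsin : c * Real.sin θ = γ * b := by rw [hsinθ, hcdef]; field_simp
    have himθ : ∀ t : ℝ, (GRg c θ ((t:ℂ) - (θ:ℂ)*Complex.I)).im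
        = (1/2) * Real.sinh (2*t) * Real.exp (-(γ*β) * Real.cosh t)
            * Real.sin (γ*b*Real.sinh t) := by
      intro t
      unfold GRg
      rw [show 2*((t:ℂ) - (θ:ℂ)*Complex.I) + 2*(θ:ℂ)*Complex.I = ((2*t : ℝ):ℂ) by
        push_cast; ring]
      rw [show Complex.sinh ((2*t:ℝ):ℂ) = ((Real.sinh (2*t) : ℝ):ℂ) from
        (Complex.ofReal_sinh _).symm]
      have e5 : -(c:ℂ) * Complex.cosh ((t:ℂ) - (θ:ℂ)*Complex.I)
          = ((-(γ*β) * Real.cosh t : ℝ):ℂ) + (((γ*b) * Real.sinh t : ℝ):ℂ) * Complex.I := by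
        rw [show (t:ℂ) - (θ:ℂ)*Complex.I = (t:ℂ) + ((-θ:ℝ):ℂ)*Complex.I by push_cast; ring,
          GR_cosh_add_mul_I]
        apply Complex.ext
        · simp [Complex.mul_re, Real.cos_neg, Real.sin_neg, Complex.cos_ofReal_re,
            Complex.sin_ofReal_re, Complex.sinh_ofReal_re, Complex.cosh_ofReal_re]
          linear_combination (Real.cosh t) * hccos
        · simp [Complex.mul_im, Real.cos_neg, Real.sin_neg, Complex.cos_ofReal_re,
            Complex.sin_ofReal_re, Complex.sinh_ofReal_re, Complex.cosh_ofReal_re]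
          linear_combination (Real.sinh t) * hcsin
      rw [e5]
      rw [show (1/2:ℂ) * ((Real.sinh (2*t) : ℝ):ℂ) = ((1/2 * Real.sinh (2*t) : ℝ):ℂ) by
        push_cast; ring]
      rw [GR_im_helper2]
      ring
    calc (h θ).im = ∫ t in Ioi (0:ℝ), (GRg c θ ((t:ℂ) - (θ:ℂ)*Complex.I)).im := by
          rw [hhdef]
          exact (integral_im (hgint θ (by
            rw [_root_.abs_of_nonneg hθ0]; linarith))).symm
      _ = _ := MeasureTheory.setIntegral_congr_fun measurableSet_Ioi (fun t _ => himθ t)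
  -- substitution x = γ sinh t
  have hsub : (∫ x in Set.Ioi (0:ℝ), x * Real.exp (-β * Real.sqrt (γ^2 + x^2)) * Real.sin (b*x))
      = γ^2 * (h θ).im := by
    have himg : (fun t : ℝ => γ * Real.sinh t) '' (Ioi 0) = Ioi (0:ℝ) := by
      ext y
      constructor
      · rintro ⟨t, ht, rfl⟩
        exact mul_pos hγ (Real.sinh_pos_iff.2 ht)
      · intro hy
        refine ⟨Real.arsinh (y/γ), Real.arsinh_pos_iff.2 (div_pos hy hγ), ?_⟩
        show γ * Real.sinh (Real.arsinh (y/γ)) = y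
        rw [Real.sinh_arsinh]
        field_simp
    have hderiv : ∀ t ∈ Ioi (0:ℝ), HasDerivWithinAt (fun t : ℝ => γ * Real.sinh t)
        (γ * Real.cosh t) (Ioi 0) t := fun t _ =>
      ((Real.hasDerivAt_sinh t).const_mul γ).hasDerivWithinAt
    have hsm : StrictMono (fun t : ℝ => γ * Real.sinh t) := by
      intro a b hab
      dsimp only
      have := Real.sinh_lt_sinh.2 hab
      nlinarith
    have himage := MeasureTheory.integral_image_eq_integral_abs_deriv_smul measurableSet_Ioi
      hderiv (hsm.injective.injOn) (fun x => x * Real.exp (-β * Real.sqrt (γ^2 + x^2)) * Real.sin (b*x))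
    rw [himg] at himage
    rw [himage, hθim]
    rw [← MeasureTheory.integral_const_mul]
    apply MeasureTheory.setIntegral_congr_fun measurableSet_Ioi
    intro t ht
    have hch : 0 < Real.cosh t := Real.cosh_pos (x := t)
    have hsq : Real.sqrt (γ^2 + (γ * Real.sinh t)^2) = γ * Real.cosh t := by
      rw [show γ^2 + (γ * Real.sinh t)^2 = (γ * Real.cosh t)^2 by
        linear_combination (-(γ^2)) * Real.cosh_sq t]
      exact Real.sqrt_sq (by positivity)
    simp only [smul_eq_mul]
    rw [hsq, _root_.abs_of_nonneg (by positivity : (0:ℝ) ≤ γ * Real.cosh t)]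
    rw [Real.sinh_two_mul]
    rw [show b * (γ * Real.sinh t) = γ * b * Real.sinh t by ring,
      show -β * (γ * Real.cosh t) = -(γ*β) * Real.cosh t by ring]
    ring
  -- final algebra
  rw [hsub, him, h0im, Real.sin_two_mul, hsinθ, hcosθ]
  rw [show β^2 + b^2 = z^2 from hz2.symm]
  field_simp

/-- Gradshteyn–Ryzhik 3.915: for `β > 0`, `γ > 0`, `b ∈ ℝ`,
`∫₀^∞ x exp(-β √(γ² + x²)) sin(b x) dx = β b γ² K₂(γ √(β² + b²)) / (β² + b²)`. -/
theorem integral_x_exp_sqrt_sin (β γ b : ℝ) (hβ : 0 < β) (hγ : 0 < γ) :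
    IntegrableOn (fun x : ℝ => x * Real.exp (-β * Real.sqrt (γ ^ 2 + x ^ 2)) * Real.sin (b * x))
      (Set.Ioi 0) volume ∧
    ∫ x in Set.Ioi (0 : ℝ), x * Real.exp (-β * Real.sqrt (γ ^ 2 + x ^ 2)) * Real.sin (b * x)
      = β * b * γ ^ 2 * besselK 2 (γ * Real.sqrt (β ^ 2 + b ^ 2)) / (β ^ 2 + b ^ 2) := by
  refine ⟨GR_integrableOn β γ b hβ, ?_⟩
  rcases le_or_gt 0 b with hb | hb
  · exact GR_main β γ b hβ hγ hb
  · have hmain := GR_main β γ (-b) hβ hγ (by linarith)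
    have hneg : ∫ x in Set.Ioi (0:ℝ),
          x * Real.exp (-β * Real.sqrt (γ^2+x^2)) * Real.sin (b*x)
        = -∫ x in Set.Ioi (0:ℝ),
            x * Real.exp (-β * Real.sqrt (γ^2+x^2)) * Real.sin ((-b)*x) := by
      rw [← MeasureTheory.integral_neg]
      apply MeasureTheory.setIntegral_congr_fun measurableSet_Ioi
      intro x _
      dsimp only
      rw [show (-b)*x = -(b*x) by ring, Real.sin_neg]
      ring
    rw [hneg, hmain, show (-b)^2 = b^2 by ring]
    ring
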